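/- arXiv:2205.11552 — 3 statements merged into one kernel-verified Lean document; each statement's English description precedes it below -/
import Mathlib

section
/- Let H be the heart of a bounded t-structure on a triangulated category T. Let x, y ∈ T with x ∈ [[a,b]]_H and y ∈ [[c,d]]_H (cohomology with respect to H concentrated in [a,b] resp. [c,d], nonvanishing at both endpoints). Then there is an isomorphism Hom_T(y, x[a-d]) ≅ Hom_T(H^d_H(y), H^a_H(x)). -/
open CategoryTheory Limits Pretriangulated Triangulated

namespace TSt

variable {C : Type*} [Category C] [Preadditive C] [HasZeroObject C] [HasShift C ℤ]
  [∀ (n : ℤ), (shiftFunctor C n).Additive] [Pretriangulated C]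

/-- The truncation `τ_{≤ n} A` with respect to a t-structure, defined (up to isomorphism)
by the triangle `τ_{≤n} A → A → τ_{≥ n+1} A → `. -/
noncomputable def truncLEObj (t : TStructure C) (n : ℤ) (A : C) : C :=
  (t.exists_triangle A n (n + 1) rfl).choose

/-- The truncation `τ_{≥ n} A` with respect to a t-structure. -/
noncomputable def truncGEObj (t : TStructure C) (n : ℤ) (A : C) : C :=
  (t.exists_triangle A (n - 1) n (by omega)).choose_spec.choose

/-- The `n`-th cohomology object of `A` with respect to the t-structure `t`:
`H^n(A) = (τ_{≥ n} τ_{≤ n} A)⟦n⟧`, an object of the heart. -/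
noncomputable def cohObj (t : TStructure C) (n : ℤ) (A : C) : C :=
  (truncGEObj t n (truncLEObj t n A))⟦n⟧

/-- Membership in the heart of a t-structure. -/
def InHeart (t : TStructure C) (A : C) : Prop := t.le 0 A ∧ t.ge 0 A

/-- A t-structure is bounded if every object is bounded above and below for it. -/
def IsBoundedTStructure (t : TStructure C) : Prop :=
  ∀ X : C, ∃ a b : ℤ, t.ge a X ∧ t.le b X

/-- `x ∈ [a,b]_t` : the cohomology of `x` with respect to `t` vanishes outside `[a,b]`. -/
def MemIcc (t : TStructure C) (a b : ℤ) (x : C) : Prop :=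
  ∀ i : ℤ, (i < a ∨ b < i) → IsZero (cohObj t i x)

/-- `x ∈ [[a,b]]_t` : cohomology concentrated in `[a,b]`, nonzero at both endpoints. -/
def MemIccStrict (t : TStructure C) (a b : ℤ) (x : C) : Prop :=
  MemIcc t a b x ∧ ¬ IsZero (cohObj t a x) ∧ ¬ IsZero (cohObj t b x)


section Aux

variable (t : TStructure C)

/-- No morphisms from a `≤ n₀` object to a `≥ n₁` object when `n₀ < n₁`. -/
lemma hom_zero {X Y : C} {n₀ n₁ : ℤ} (hX : t.le n₀ X) (hY : t.ge n₁ Y) (h : n₀ < n₁)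
    (f : X ⟶ Y) : f = 0 := by
  have hX' : t.le 0 (X⟦n₀⟧) := t.le_shift n₀ n₀ 0 (by omega) X hX
  have hY' : t.ge 1 (Y⟦n₀⟧) :=
    t.ge_antitone (by omega : (1:ℤ) ≤ n₁ - n₀) _ (t.ge_shift n₁ n₀ (n₁ - n₀) (by omega) Y hY)
  have hz : (shiftFunctor C n₀).map f = 0 := t.zero' _ hX' hY'
  apply (shiftFunctor C n₀).map_injective
  rw [hz, Functor.map_zero]

lemma truncLE_spec (n : ℤ) (A : C) :
    t.le n (truncLEObj t n A) ∧ ∃ (B : C) (_ : t.ge (n+1) B) (f : truncLEObj t n A ⟶ A)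
      (g : A ⟶ B) (h : B ⟶ (truncLEObj t n A)⟦(1:ℤ)⟧),
      Triangle.mk f g h ∈ distTriang C := by
  obtain ⟨B, h₁, h₂, f, g, h, mem⟩ := (t.exists_triangle A n (n+1) rfl).choose_spec
  exact ⟨h₁, B, h₂, f, g, h, mem⟩

lemma truncGE_spec (n : ℤ) (A : C) :
    t.ge n (truncGEObj t n A) ∧ ∃ (F : C) (_ : t.le (n-1) F) (f : F ⟶ A)
      (g : A ⟶ truncGEObj t n A) (h : truncGEObj t n A ⟶ F⟦(1:ℤ)⟧),
      Triangle.mk f g h ∈ distTriang C := by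
  obtain ⟨h₁, h₂, f, g, h, mem⟩ :=
    (t.exists_triangle A (n-1) n (by omega)).choose_spec.choose_spec
  exact ⟨h₂, _, h₁, f, g, h, mem⟩

lemma isZero_of_isZero_shift {X : C} (n : ℤ) (h : IsZero (X⟦n⟧)) : IsZero X := by
  rw [IsZero.iff_id_eq_zero] at h ⊢
  apply (shiftFunctor C n).map_injective
  simp only [CategoryTheory.Functor.map_id, CategoryTheory.Functor.map_zero, h]

lemma isZero_shift_of_isZero {X : C} (n : ℤ) (h : IsZero X) : IsZero (X⟦n⟧) := by
  rw [IsZero.iff_id_eq_zero] at h ⊢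
  rw [← CategoryTheory.Functor.map_id, h, CategoryTheory.Functor.map_zero]

/-- Core lemma: in a distinguished triangle with `mor₁ = 0` and no maps `A⟦1⟧ ⟶ B`,
the first object is zero and `mor₂` is an isomorphism. -/
lemma isZero_isIso_of_mor₁_zero {A Y B : C} {u : A ⟶ Y} {v : Y ⟶ B} {w : B ⟶ A⟦(1:ℤ)⟧}
    (hT : Triangle.mk u v w ∈ distTriang C) (hu : u = 0)
    (hvan : ∀ g : A⟦(1:ℤ)⟧ ⟶ B, g = 0) : IsZero A ∧ IsIso v := by
  have hrot := rot_of_distTriang _ hT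
  obtain ⟨s, hs⟩ := Triangle.coyoneda_exact₃ _ hrot (𝟙 (A⟦(1:ℤ)⟧))
    (by exact (Category.id_comp _).trans (neg_eq_zero.mpr (by rw [hu]; exact Functor.map_zero _ _ _)))
  have hA1 : IsZero (A⟦(1:ℤ)⟧) := by
    rw [IsZero.iff_id_eq_zero, hs, show s = 0 from hvan s]; exact zero_comp
  have hA : IsZero A := isZero_of_isZero_shift _ hA1
  exact ⟨hA, (Triangle.isZero₁_iff_isIso₂ _ hT).1 hA⟩

/-- Core lemma: in a distinguished triangle with `mor₂ = 0` and no maps `A⟦1⟧ ⟶ B`,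
the third object is zero and `mor₁` is an isomorphism. -/
lemma isZero_isIso_of_mor₂_zero {A Y B : C} {u : A ⟶ Y} {v : Y ⟶ B} {w : B ⟶ A⟦(1:ℤ)⟧}
    (hT : Triangle.mk u v w ∈ distTriang C) (hv : v = 0)
    (hvan : ∀ g : A⟦(1:ℤ)⟧ ⟶ B, g = 0) : IsZero B ∧ IsIso u := by
  have hrot := rot_of_distTriang _ hT
  obtain ⟨g, hg⟩ := Triangle.yoneda_exact₂ _ hrot (𝟙 B) (by exact (Category.comp_id _).trans hv)
  have hB : IsZero B := by
    rw [IsZero.iff_id_eq_zero, hg, show g = 0 from hvan g]; exact comp_zero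
  exact ⟨hB, (Triangle.isZero₃_iff_isIso₁ _ hT).1 hB⟩

/-- Orthogonality characterization of `GE n`. -/
lemma ge_of_hom_zero {n : ℤ} {Y : C} (h : ∀ (W : C), t.le (n-1) W → ∀ f : W ⟶ Y, f = 0) :
    t.ge n Y := by
  obtain ⟨hB, F, hF, f, g, w, mem⟩ := truncGE_spec t n Y
  have hvan : ∀ gg : F⟦(1:ℤ)⟧ ⟶ truncGEObj t n Y, gg = 0 := fun gg =>
    hom_zero t (t.le_shift (n-1) 1 (n-2) (by omega) F hF) hB (by omega) gg
  obtain ⟨-, hiso⟩ := isZero_isIso_of_mor₁_zero mem (h F hF f) hvan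
  exact (t.ge n).prop_of_iso (asIso g).symm hB

/-- Orthogonality characterization of `LE n`. -/
lemma le_of_hom_zero {n : ℤ} {X : C} (h : ∀ (W : C), t.ge (n+1) W → ∀ f : X ⟶ W, f = 0) :
    t.le n X := by
  obtain ⟨hK, B, hB, f, g, w, mem⟩ := truncLE_spec t n X
  have hvan : ∀ gg : (truncLEObj t n X)⟦(1:ℤ)⟧ ⟶ B, gg = 0 := fun gg =>
    hom_zero t (t.le_shift n 1 (n-1) (by omega) _ hK) hB (by omega) gg
  obtain ⟨-, hiso⟩ := isZero_isIso_of_mor₂_zero mem (h B hB g) hvan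
  exact (t.le n).prop_of_iso (asIso f) hK

/-- If `A` is `≥ n` then so is `τ_{≤ n} A`. -/
lemma truncLE_ge_self {n : ℤ} {A : C} (hA : t.ge n A) : t.ge n (truncLEObj t n A) := by
  obtain ⟨hK, B, hB, f, g, w, mem⟩ := truncLE_spec t n A
  apply ge_of_hom_zero t
  intro W hW φ
  have hinv := inv_rot_of_distTriang _ mem
  have hφf : φ ≫ f = 0 := hom_zero t hW hA (by omega) _
  obtain ⟨ψ, hψ⟩ := Triangle.coyoneda_exact₂ _ hinv φ (by exact hφf)
  rw [hψ]
  have : ψ = 0 := hom_zero t hW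
    (t.ge_shift (n+1) (-1) (n+2) (by omega) B hB) (by omega) ψ
  rw [this]; exact zero_comp

/-- If `A` is `≤ n` then so is `τ_{≥ n} A`. -/
lemma truncGE_le_self {n : ℤ} {A : C} (hA : t.le n A) : t.le n (truncGEObj t n A) := by
  obtain ⟨hP, F, hF, f, g, w, mem⟩ := truncGE_spec t n A
  apply le_of_hom_zero t
  intro W hW φ
  obtain ⟨ψ, hψ⟩ := Triangle.yoneda_exact₃ _ mem φ (hom_zero t hA hW (by omega) _)
  rw [hψ]
  have : ψ = 0 := hom_zero t (t.le_shift (n-1) 1 (n-2) (by omega) F hF) hW (by omega) ψ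
  rw [this]; exact comp_zero

/-- If `A` is `≥ n`, the truncation map `A ⟶ τ_{≥ n} A` is (witnessed by) an isomorphism. -/
lemma nonempty_iso_truncGE {n : ℤ} {A : C} (hA : t.ge n A) :
    Nonempty (A ≅ truncGEObj t n A) := by
  obtain ⟨hP, F, hF, f, g, w, mem⟩ := truncGE_spec t n A
  have hvan : ∀ gg : F⟦(1:ℤ)⟧ ⟶ truncGEObj t n A, gg = 0 := fun gg =>
    hom_zero t (t.le_shift (n-1) 1 (n-2) (by omega) F hF) hP (by omega) gg
  obtain ⟨-, hiso⟩ := isZero_isIso_of_mor₁_zero mem (hom_zero t hF hA (by omega) f) hvan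
  exact ⟨asIso g⟩

/-- If `A` is `≤ n`, the truncation map `τ_{≤ n} A ⟶ A` is (witnessed by) an isomorphism. -/
lemma nonempty_iso_truncLE {n : ℤ} {A : C} (hA : t.le n A) :
    Nonempty (truncLEObj t n A ≅ A) := by
  obtain ⟨hK, B, hB, f, g, w, mem⟩ := truncLE_spec t n A
  have hvan : ∀ gg : (truncLEObj t n A)⟦(1:ℤ)⟧ ⟶ B, gg = 0 := fun gg =>
    hom_zero t (t.le_shift n 1 (n-1) (by omega) _ hK) hB (by omega) gg
  obtain ⟨-, hiso⟩ := isZero_isIso_of_mor₂_zero mem (hom_zero t hA hB (by omega) g) hvan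
  exact ⟨asIso f⟩

lemma le_of_isZero_truncGE {n : ℤ} {A : C} (h : IsZero (truncGEObj t n A)) :
    t.le (n-1) A := by
  obtain ⟨hP, F, hF, f, g, w, mem⟩ := truncGE_spec t n A
  obtain ⟨-, hiso⟩ := isZero_isIso_of_mor₂_zero mem (h.eq_of_tgt g 0)
    (fun gg => h.eq_of_tgt gg 0)
  exact (t.le (n-1)).prop_of_iso (asIso f) hF

lemma ge_of_isZero_truncLE {n : ℤ} {A : C} (h : IsZero (truncLEObj t n A)) :
    t.ge (n+1) A := by
  obtain ⟨hK, B, hB, f, g, w, mem⟩ := truncLE_spec t n A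
  obtain ⟨-, hiso⟩ := isZero_isIso_of_mor₁_zero mem (h.eq_of_src f 0)
    (fun gg => (isZero_shift_of_isZero _ h).eq_of_src gg 0)
  exact (t.ge (n+1)).prop_of_iso (asIso g).symm hB

lemma ge_succ_of_isZero_coh {n : ℤ} {A : C} (hA : t.ge n A) (h : IsZero (cohObj t n A)) :
    t.ge (n+1) A := by
  have h' : IsZero (truncGEObj t n (truncLEObj t n A)) := isZero_of_isZero_shift n h
  have hK : t.ge n (truncLEObj t n A) := truncLE_ge_self t hA
  obtain ⟨e⟩ := nonempty_iso_truncGE t hK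
  exact ge_of_isZero_truncLE t (h'.of_iso e)

lemma le_pred_of_isZero_coh {n : ℤ} {A : C} (hA : t.le n A) (h : IsZero (cohObj t n A)) :
    t.le (n-1) A := by
  have h' : IsZero (truncGEObj t n (truncLEObj t n A)) := isZero_of_isZero_shift n h
  have hK : t.le (n-1) (truncLEObj t n A) := le_of_isZero_truncGE t h'
  obtain ⟨e⟩ := nonempty_iso_truncLE t hA
  exact (t.le (n-1)).prop_of_iso e hK

lemma ge_of_memIcc (ht : IsBoundedTStructure t) {a b : ℤ} {x : C} (h : MemIcc t a b x) :
    t.ge a x := by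
  obtain ⟨a₀, b₀, hga₀, -⟩ := ht x
  by_cases hle : a ≤ a₀
  · exact t.ge_antitone hle x hga₀
  push_neg at hle
  suffices H : ∀ k : ℕ, ∀ e : ℤ, e ≤ a → a - e = k → t.ge e x → t.ge a x from
    H (a - a₀).toNat a₀ (by omega) (by omega) hga₀
  intro k
  induction k with
  | zero => exact fun e h1 h2 h3 => by obtain rfl : e = a := (by omega); exact h3
  | succ m ih =>
    intro e h1 h2 h3
    exact ih (e+1) (by omega) (by omega)
      (ge_succ_of_isZero_coh t h3 (h e (Or.inl (by omega))))

lemma le_of_memIcc (ht : IsBoundedTStructure t) {a b : ℤ} {x : C} (h : MemIcc t a b x) :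
    t.le b x := by
  obtain ⟨a₀, b₀, -, hlb₀⟩ := ht x
  by_cases hle : b₀ ≤ b
  · exact t.le_monotone hle x hlb₀
  push_neg at hle
  suffices H : ∀ k : ℕ, ∀ e : ℤ, b ≤ e → e - b = k → t.le e x → t.le b x from
    H (b₀ - b).toNat b₀ (by omega) (by omega) hlb₀
  intro k
  induction k with
  | zero => exact fun e h1 h2 h3 => by obtain rfl : e = b := (by omega); exact h3
  | succ m ih =>
    intro e h1 h2 h3
    have := le_pred_of_isZero_coh t h3 (h e (Or.inr (by omega)))
    exact ih (e-1) (by omega) (by omega) this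

end Aux

section AddEquivs

/-- Precomposition with an isomorphism, as an `AddEquiv` on hom groups. -/
@[simps]
noncomputable def precompAddEquiv {X Y : C} (e : X ≅ Y) (Z : C) :
    (Y ⟶ Z) ≃+ (X ⟶ Z) where
  toFun f := e.hom ≫ f
  invFun f := e.inv ≫ f
  left_inv f := by simp
  right_inv f := by simp
  map_add' f g := by simp [Preadditive.comp_add]

/-- Postcomposition with an isomorphism, as an `AddEquiv` on hom groups. -/
@[simps]
noncomputable def postcompAddEquiv (Z : C) {X Y : C} (e : X ≅ Y) :
    (Z ⟶ X) ≃+ (Z ⟶ Y) where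
  toFun f := f ≫ e.hom
  invFun f := f ≫ e.inv
  left_inv f := by simp
  right_inv f := by simp
  map_add' f g := by simp [Preadditive.add_comp]

/-- The action of the shift functor on hom groups, as an `AddEquiv`. -/
@[simps]
noncomputable def shiftAddEquiv (n : ℤ) (X Y : C) :
    (X ⟶ Y) ≃+ (X⟦n⟧ ⟶ Y⟦n⟧) where
  toFun f := (shiftFunctor C n).map f
  invFun g := (shiftFunctor C n).preimage g
  left_inv f := (shiftFunctor C n).preimage_map f
  right_inv g := (shiftFunctor C n).map_preimage g
  map_add' f g := Functor.map_add _

/-- Given a distinguished triangle `A ⟶ B ⟶ P ⟶ A⟦1⟧` and an object `z` receiving no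
morphisms from `A` and `A⟦1⟧`, precomposition with `B ⟶ P` is a bijection on homs to `z`. -/
lemma homAddEquiv_of_triangle_left {A B P : C} {u : A ⟶ B} {v : B ⟶ P} {w : P ⟶ A⟦(1:ℤ)⟧}
    (hT : Triangle.mk u v w ∈ distTriang C) (z : C)
    (h₁ : ∀ f : A ⟶ z, f = 0) (h₂ : ∀ f : A⟦(1:ℤ)⟧ ⟶ z, f = 0) :
    Nonempty ((P ⟶ z) ≃+ (B ⟶ z)) := by
  refine ⟨AddEquiv.ofBijective
    (AddMonoidHom.mk' (fun g => v ≫ g) (fun g g' => by simp [Preadditive.comp_add])) ⟨?_, ?_⟩⟩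
  · intro g g' h
    change v ≫ g = v ≫ g' at h
    obtain ⟨φ, hφ⟩ := Triangle.yoneda_exact₃ _ hT (g - g')
      (by exact (Preadditive.comp_sub v g g').trans (by rw [h]; exact sub_self _))
    have : g - g' = 0 := by rw [hφ, show φ = 0 from h₂ φ]; exact comp_zero
    rw [← sub_eq_zero]
    exact this
  · intro f
    obtain ⟨g, hg⟩ := Triangle.yoneda_exact₂ _ hT f (by exact h₁ (u ≫ f))
    exact ⟨g, hg.symm⟩

/-- Given a distinguished triangle `A ⟶ B ⟶ P ⟶ A⟦1⟧` and an object `z` admitting no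
morphisms to `P` and `P⟦-1⟧`, postcomposition with `A ⟶ B` is a bijection on homs from `z`. -/
lemma homAddEquiv_of_triangle_right {A B P : C} {u : A ⟶ B} {v : B ⟶ P} {w : P ⟶ A⟦(1:ℤ)⟧}
    (hT : Triangle.mk u v w ∈ distTriang C) (z : C)
    (h₁ : ∀ f : z ⟶ P, f = 0) (h₂ : ∀ f : z ⟶ P⟦(-1:ℤ)⟧, f = 0) :
    Nonempty ((z ⟶ A) ≃+ (z ⟶ B)) := by
  refine ⟨AddEquiv.ofBijective
    (AddMonoidHom.mk' (fun g => g ≫ u) (fun g g' => by simp [Preadditive.add_comp])) ⟨?_, ?_⟩⟩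
  · intro g g' h
    change g ≫ u = g' ≫ u at h
    have hinv := inv_rot_of_distTriang _ hT
    obtain ⟨φ, hφ⟩ := Triangle.coyoneda_exact₂ _ hinv (g - g')
      (by exact (Preadditive.sub_comp g g' u).trans (by rw [h]; exact sub_self _))
    have : g - g' = 0 := by rw [hφ, show φ = 0 from h₂ φ]; exact zero_comp
    rw [← sub_eq_zero]
    exact this
  · intro f
    obtain ⟨g, hg⟩ := Triangle.coyoneda_exact₂ _ hT f (by exact h₁ (f ≫ v))
    exact ⟨g, hg.symm⟩

end AddEquivs

/-- If `x ∈ [[a,b]]_H` and `y ∈ [[c,d]]_H` for the heart of a bounded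
t-structure, then `Hom(y, x⟦a-d⟧) ≅ Hom(H^d(y), H^a(x))` as abelian groups. -/
theorem hom_shift_iso_hom_top_bottom_cohomology
    (t : TStructure C) (ht : IsBoundedTStructure t) (x y : C) (a b c d : ℤ)
    (hx : MemIccStrict t a b x) (hy : MemIccStrict t c d y) :
    Nonempty ((y ⟶ x⟦(a - d : ℤ)⟧) ≃+ (cohObj t d y ⟶ cohObj t a x)) := by
  have hxGE : t.ge a x := ge_of_memIcc t ht hx.1
  have hyLE : t.le d y := le_of_memIcc t ht hy.1
  have hzGE : t.ge d (x⟦(a - d : ℤ)⟧) := t.ge_shift a (a-d) d (by omega) x hxGE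
  -- the y-side
  obtain ⟨eK⟩ := nonempty_iso_truncLE t hyLE
  have hKle : t.le d (truncLEObj t d y) := (truncLE_spec t d y).1
  obtain ⟨hP, F, hF, u, v, w, memT2⟩ := truncGE_spec t d (truncLEObj t d y)
  have e₁ : (y ⟶ x⟦(a - d : ℤ)⟧) ≃+ (truncLEObj t d y ⟶ x⟦(a - d : ℤ)⟧) :=
    precompAddEquiv eK _
  obtain ⟨e₂⟩ := homAddEquiv_of_triangle_left memT2 (x⟦(a - d : ℤ)⟧)
    (fun f => hom_zero t hF hzGE (by omega) f)
    (fun f => hom_zero t (t.le_shift (d-1) 1 (d-2) (by omega) F hF) hzGE (by omega) f)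
  have e₃ : (truncGEObj t d (truncLEObj t d y) ⟶ x⟦(a - d : ℤ)⟧) ≃+
      ((truncGEObj t d (truncLEObj t d y))⟦(d-a:ℤ)⟧ ⟶ (x⟦(a - d : ℤ)⟧)⟦(d-a:ℤ)⟧) :=
    shiftAddEquiv (d-a) _ _
  have ezx : (x⟦(a - d : ℤ)⟧)⟦(d-a:ℤ)⟧ ≅ x :=
    (shiftFunctorCompIsoId C (a-d) (d-a) (by omega)).app x
  have e₄ := postcompAddEquiv ((truncGEObj t d (truncLEObj t d y))⟦(d-a:ℤ)⟧) ezx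
  -- the x-side
  obtain ⟨hKx, Gx, hGx, ux, vx, wx, memT1x⟩ := truncLE_spec t a x
  have hKxGE : t.ge a (truncLEObj t a x) := truncLE_ge_self t hxGE
  obtain ⟨ePx⟩ := nonempty_iso_truncGE t hKxGE
  have hPLE : t.le d (truncGEObj t d (truncLEObj t d y)) := truncGE_le_self t hKle
  have hP'LE : t.le a ((truncGEObj t d (truncLEObj t d y))⟦(d-a:ℤ)⟧) :=
    t.le_shift d (d-a) a (by omega) _ hPLE
  obtain ⟨e₅⟩ := homAddEquiv_of_triangle_right memT1x
    ((truncGEObj t d (truncLEObj t d y))⟦(d-a:ℤ)⟧)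
    (fun f => hom_zero t hP'LE hGx (by omega) f)
    (fun f => hom_zero t hP'LE (t.ge_shift (a+1) (-1) (a+2) (by omega) Gx hGx) (by omega) f)
  have e₆ := postcompAddEquiv ((truncGEObj t d (truncLEObj t d y))⟦(d-a:ℤ)⟧) ePx
  have e₇ : ((truncGEObj t d (truncLEObj t d y))⟦(d-a:ℤ)⟧ ⟶
        truncGEObj t a (truncLEObj t a x)) ≃+
      (((truncGEObj t d (truncLEObj t d y))⟦(d-a:ℤ)⟧)⟦(a:ℤ)⟧ ⟶
        (truncGEObj t a (truncLEObj t a x))⟦(a:ℤ)⟧) :=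
    shiftAddEquiv a _ _
  have esh : (truncGEObj t d (truncLEObj t d y))⟦(d:ℤ)⟧ ≅
      ((truncGEObj t d (truncLEObj t d y))⟦(d-a:ℤ)⟧)⟦(a:ℤ)⟧ :=
    (shiftFunctorAdd' C (d-a) a d (by omega)).app _
  have e₈ := precompAddEquiv esh ((truncGEObj t a (truncLEObj t a x))⟦(a:ℤ)⟧)
  exact ⟨((((((e₁.trans e₂.symm).trans e₃).trans e₄).trans e₅.symm).trans e₆).trans e₇).trans e₈⟩

end TSt
end

section
/- Let {y_1, ..., y_r} be a simple minded collection U in T = D^b(A) for a finite dimensional algebra A, and let x ∈ T satisfy x ∈ [a,b]_U (cohomology with respect to the heart of the bounded t-structure corresponding to U concentrated in [a,b]). Then for any i, x ∈ [a, b+1]_{ν_i U}, where ν_i U is the left mutation of U at y_i. -/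
open CategoryTheory Limits Pretriangulated DerivedCategory

namespace SMCF

variable (A : Type) [Ring A] [Algebra ℂ A] [FiniteDimensional ℂ A]
variable [HasDerivedCategory (ModuleCat.{0} A)]

/-- An object of the derived category is (cohomologically) bounded, i.e. belongs to
`D^b(mod A)`. -/
def Bounded (x : DerivedCategory (ModuleCat.{0} A)) : Prop :=
  ∃ a b : ℤ, ∀ i : ℤ, (i < a ∨ b < i) →
    IsZero ((homologyFunctor (ModuleCat.{0} A) i).obj x)

/-- The thick closure of a class of objects: the smallest class containing them which is
closed under shifts, extensions (cones) and retracts (direct summands). -/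
inductive ThickClosure (P : DerivedCategory (ModuleCat.{0} A) → Prop) :
    DerivedCategory (ModuleCat.{0} A) → Prop
  | of {x} (h : P x) : ThickClosure P x
  | zero {x} (h : IsZero x) : ThickClosure P x
  | shift {x} (n : ℤ) (h : ThickClosure P x) : ThickClosure P (x⟦n⟧)
  | ext {x y z} (f : x ⟶ y) (g : y ⟶ z) (w : z ⟶ x⟦(1 : ℤ)⟧)
      (hT : Triangle.mk f g w ∈ distTriang _)
      (hx : ThickClosure P x) (hz : ThickClosure P z) : ThickClosure P y
  | retract {x z} (s : x ⟶ z) (r : z ⟶ x) (hsr : s ≫ r = 𝟙 x)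
      (h : ThickClosure P z) : ThickClosure P x

/-- The extension closure of a class of objects (no shifts): the smallest class
containing them and all zero objects, closed under extensions. -/
inductive ExtClosure (P : DerivedCategory (ModuleCat.{0} A) → Prop) :
    DerivedCategory (ModuleCat.{0} A) → Prop
  | of {x} (h : P x) : ExtClosure P x
  | zero {x} (h : IsZero x) : ExtClosure P x
  | iso {x y} (e : x ≅ y) (h : ExtClosure P x) : ExtClosure P y
  | ext {x y z} (f : x ⟶ y) (g : y ⟶ z) (w : z ⟶ x⟦(1 : ℤ)⟧)
      (hT : Triangle.mk f g w ∈ distTriang _)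
      (hx : ExtClosure P x) (hz : ExtClosure P z) : ExtClosure P y

/-- A simple minded collection in `D^b(mod A)`: a finite collection `y i` of (bounded)
objects with no negative self-extensions, `Hom(y i, y j) ≅ ℂ δ_{ij}`, and which
generates `D^b(mod A)` as a thick subcategory. -/
structure SMC where
  ι : Type
  [fin : Fintype ι]
  y : ι → DerivedCategory (ModuleCat.{0} A)
  bounded : ∀ i, Bounded A (y i)
  negExt : ∀ i j (t : ℤ), t < 0 → ∀ f : y i ⟶ (y j)⟦t⟧, f = 0
  hom_zero : ∀ i j, i ≠ j → ∀ f : y i ⟶ y j, f = 0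
  brick : ∀ i, Nonempty (End (y i) ≃+* ℂ)
  generates : ∀ x, Bounded A x → ThickClosure A (fun z => ∃ i, z = y i) x

attribute [instance] SMC.fin

/-- `x ∈ [a,b]` with respect to a family `y` of objects (e.g. a simple minded
collection), via the Hom-vanishing characterisation of cohomology bounds with respect
to the corresponding heart: `Hom(y i, x[t]) = 0` for `t < a` and
`Hom(x, (y i)[t]) = 0` for `t < -b`. -/
def MemIccFam {ι : Type} (y : ι → DerivedCategory (ModuleCat.{0} A)) (a b : ℤ)
    (x : DerivedCategory (ModuleCat.{0} A)) : Prop :=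
  (∀ i (t : ℤ), t < a → ∀ f : y i ⟶ x⟦t⟧, f = 0) ∧
  (∀ i (t : ℤ), t < -b → ∀ f : x ⟶ (y i)⟦t⟧, f = 0)

/-- `x ∈ [a,b]_U` for a simple minded collection `U`. -/
def MemIcc (U : SMC A) (a b : ℤ) (x : DerivedCategory (ModuleCat.{0} A)) : Prop :=
  MemIccFam A U.y a b x

/-- The left mutation `ν_i U` of a simple minded collection `U` at `y i`:
`y' i = (y i)[1]`, and for `j ≠ i`, `y' j` is the cone of a (minimal) left approximation
`(y j)[-1] ⟶ c j` into the extension closure of `y i`. -/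
structure LeftMutation (U : SMC A) (i : U.ι) where
  y' : U.ι → DerivedCategory (ModuleCat.{0} A)
  at_i : Nonempty (y' i ≅ (U.y i)⟦(1 : ℤ)⟧)
  c : U.ι → DerivedCategory (ModuleCat.{0} A)
  hc : ∀ j, j ≠ i → ExtClosure A (fun z => z = U.y i) (c j)
  φ : ∀ j, (U.y j)⟦(-1 : ℤ)⟧ ⟶ c j
  approx : ∀ j, j ≠ i → ∀ z, ExtClosure A (fun w => w = U.y i) z →
      ∀ g : (U.y j)⟦(-1 : ℤ)⟧ ⟶ z, ∃ h : c j ⟶ z, φ j ≫ h = g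
  ψ : ∀ j, c j ⟶ y' j
  χ : ∀ j, y' j ⟶ ((U.y j)⟦(-1 : ℤ)⟧)⟦(1 : ℤ)⟧
  tri : ∀ j, j ≠ i → Triangle.mk (φ j) (ψ j) (χ j) ∈ distTriang _


section Helpers

variable {A} [HasDerivedCategory (ModuleCat.{0} A)]

lemma zero_tgt_of_iso {X Y Z : DerivedCategory (ModuleCat.{0} A)} (e : Y ≅ Z) (h : ∀ g : X ⟶ Z, g = 0)
    (f : X ⟶ Y) : f = 0 := by
  have h1 : f ≫ e.hom = 0 := h _
  calc f = (f ≫ e.hom) ≫ e.inv := by simp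
  _ = 0 := by rw [h1]; simp

lemma zero_src_of_iso {X Y Z : DerivedCategory (ModuleCat.{0} A)} (e : Y ≅ X) (h : ∀ g : Y ⟶ Z, g = 0)
    (f : X ⟶ Z) : f = 0 := by
  have h1 : e.hom ≫ f = 0 := h _
  calc f = e.inv ≫ (e.hom ≫ f) := by simp
  _ = 0 := by rw [h1]; simp

lemma zero_of_shift_src (m : ℤ) {X Y : DerivedCategory (ModuleCat.{0} A)} (h0 : ∀ g : X ⟶ Y⟦-m⟧, g = 0)
    (f : X⟦m⟧ ⟶ Y) : f = 0 := by
  let adj := (shiftEquiv (DerivedCategory (ModuleCat.{0} A)) m).toAdjunction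
  have h1 : adj.homEquiv X Y f = 0 := h0 _
  have h2 := (adj.homEquiv X Y).symm_apply_apply f
  rw [h1] at h2
  rw [← h2, Adjunction.homEquiv_counit]
  simp
  rfl

/-- Covariant Hom-vanishing extends from a class to its extension closure. -/
lemma extClosure_hom_zero_src (P : DerivedCategory (ModuleCat.{0} A) → Prop) (w : DerivedCategory (ModuleCat.{0} A))
    (h0 : ∀ z, P z → ∀ f : z ⟶ w, f = 0) :
    ∀ z, ExtClosure A P z → ∀ f : z ⟶ w, f = 0 := by
  intro z hz
  induction hz with
  | of h => exact h0 _ h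
  | zero h => exact fun f => h.eq_of_src f 0
  | iso e _ ih => exact fun f => zero_src_of_iso e ih f
  | @ext x y z f g wm hT hx hz ihx ihz =>
    intro φ
    obtain ⟨ψ, hψ⟩ := Pretriangulated.Triangle.yoneda_exact₂ _ hT φ
      (by exact ihx _)
    rw [hψ, ihz ψ]
    exact comp_zero

/-- Contravariant Hom-vanishing (into a `t`-shift) extends from a class to its
extension closure. -/
lemma extClosure_hom_zero_tgt (P : DerivedCategory (ModuleCat.{0} A) → Prop) (w : DerivedCategory (ModuleCat.{0} A)) (t : ℤ)
    (h0 : ∀ z, P z → ∀ f : w ⟶ z⟦t⟧, f = 0) :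
    ∀ z, ExtClosure A P z → ∀ f : w ⟶ z⟦t⟧, f = 0 := by
  intro z hz
  induction hz with
  | of h => exact h0 _ h
  | zero h =>
    exact fun f => (((shiftFunctor (DerivedCategory (ModuleCat.{0} A)) t).map_isZero h).eq_of_tgt f 0)
  | iso e _ ih =>
    exact fun f => zero_tgt_of_iso ((shiftFunctor (DerivedCategory (ModuleCat.{0} A)) t).mapIso e).symm ih f
  | @ext x y z f g wm hT hx hz ihx ihz =>
    intro φ
    have hT' := Pretriangulated.Triangle.shift_distinguished _ hT t
    obtain ⟨ψ, hψ⟩ := Pretriangulated.Triangle.coyoneda_exact₂ _ hT' φ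
      (by exact ihz _)
    rw [hψ, ihx ψ]
    exact zero_comp

end Helpers

/-- If `U` is a simple minded collection in `D^b(A)` and
`x ∈ [a,b]_U`, then `x ∈ [a, b+1]_{ν_i U}` for every left mutation `ν_i U`. -/
theorem memIcc_left_mutation
    (U : SMC A) (x : DerivedCategory (ModuleCat.{0} A)) (hx : Bounded A x)
    (a b : ℤ) (hab : a ≤ b) (h : MemIcc A U a b x)
    (i : U.ι) (V : LeftMutation A U i) :
    MemIccFam A V.y' a (b + 1) x := by
  obtain ⟨h1, h2⟩ := h
  constructor
  · intro j t ht f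
    by_cases hj : j = i
    · subst hj
      refine zero_src_of_iso V.at_i.some.symm (fun g => ?_) f
      refine zero_of_shift_src 1 (fun g' => ?_) g
      -- g' : U.y j ⟶ (x⟦t⟧)⟦-1⟧
      refine zero_tgt_of_iso ((shiftFunctorAdd' (DerivedCategory (ModuleCat.{0} A))
        t (-1) (t - 1) (by ring)).symm.app x) (fun g'' => h1 j (t - 1) (by omega) g'') g'
    · have hT := V.tri j hj
      have hc : (Triangle.mk (V.φ j) (V.ψ j) (V.χ j)).mor₂ ≫ f = 0 :=
        extClosure_hom_zero_src (fun z => z = U.y i) _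
          (fun z hz g => by subst hz; exact h1 i t ht g) _ (V.hc j hj) _
      obtain ⟨g, hg⟩ := Pretriangulated.Triangle.yoneda_exact₃ _ hT f hc
      have hg0 : g = 0 := by
        refine zero_src_of_iso
          ((shiftFunctorCompIsoId (DerivedCategory (ModuleCat.{0} A))
            (-1) 1 (by ring)).symm.app (U.y j)) (fun g' => h1 j t ht g') g
      rw [hg, hg0, comp_zero]
      rfl
  · intro j t ht f
    by_cases hj : j = i
    · subst hj
      refine zero_tgt_of_iso ((shiftFunctor (DerivedCategory (ModuleCat.{0} A)) t).mapIso
        V.at_i.some ≪≫ ((shiftFunctorAdd' (DerivedCategory (ModuleCat.{0} A))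
          1 t (1 + t) rfl).symm.app (U.y j))) (fun g => h2 j (1 + t) (by omega) g) f
    · have hT := Pretriangulated.Triangle.shift_distinguished _ (V.tri j hj) t
      have hm : f ≫ ((CategoryTheory.shiftFunctor
          (Triangle (DerivedCategory (ModuleCat.{0} A))) t).obj
          (Triangle.mk (V.φ j) (V.ψ j) (V.χ j))).mor₃ = 0 := by
        refine zero_tgt_of_iso (Y := (((U.y j)⟦(-1 : ℤ)⟧)⟦t⟧)⟦(1 : ℤ)⟧) ?_
          (fun g => h2 j t (by omega) g) _
        exact ((shiftFunctor (DerivedCategory (ModuleCat.{0} A)) (1 : ℤ)).mapIso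
          ((shiftFunctorAdd' (DerivedCategory (ModuleCat.{0} A)) (-1) t (t - 1)
            (by ring)).symm.app (U.y j)) ≪≫
          (shiftFunctorAdd' (DerivedCategory (ModuleCat.{0} A)) (t - 1) 1 t
            (by ring)).symm.app (U.y j))
      obtain ⟨g, hg⟩ := Pretriangulated.Triangle.coyoneda_exact₃ _ hT f hm
      have hg0 : g = 0 :=
        extClosure_hom_zero_tgt (fun z => z = U.y i) x t
          (fun z hz g' => by subst hz; exact h2 i t (by omega) g') _ (V.hc j hj) g
      rw [hg, hg0, zero_comp]
      rfl


end SMCF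
end

section
/- Let U = {y_1,...,y_r} be a simple minded collection in T = D^b(A), x ∈ [a,b]_U, and suppose Hom_T(H^b_U(x), y_i) = 0 for some i. Then x ∈ [a,b]_{ν_i U}, where ν_i U is the left mutation of U at y_i. -/
open CategoryTheory Limits Pretriangulated DerivedCategory

namespace SMCF

variable (A : Type) [Ring A] [Algebra ℂ A] [FiniteDimensional ℂ A]
variable [HasDerivedCategory (ModuleCat.{0} A)]

section Helpers

variable {A}

lemma zero_of_iso_tgt {p q q' : DerivedCategory (ModuleCat.{0} A)} (e : q ≅ q')
    (h0 : ∀ f : p ⟶ q, f = 0) (f : p ⟶ q') : f = 0 := by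
  have hz : f ≫ e.inv = 0 := h0 _
  calc f = (f ≫ e.inv) ≫ e.hom := by simp
  _ = 0 := by rw [hz, zero_comp]

lemma zero_of_iso_src {p p' q : DerivedCategory (ModuleCat.{0} A)} (e : p ≅ p')
    (h0 : ∀ f : p ⟶ q, f = 0) (f : p' ⟶ q) : f = 0 := by
  have hz : e.hom ≫ f = 0 := h0 _
  calc f = e.inv ≫ (e.hom ≫ f) := by simp
  _ = 0 := by rw [hz, comp_zero]

lemma zero_shift {p q : DerivedCategory (ModuleCat.{0} A)} (n : ℤ)
    (h0 : ∀ f : p ⟶ q, f = 0) (f : p⟦n⟧ ⟶ q⟦n⟧) : f = 0 := by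
  obtain ⟨g, rfl⟩ := (shiftFunctor (DerivedCategory (ModuleCat.{0} A)) n).map_surjective f
  rw [h0 g, Functor.map_zero]

/-- Contravariant Hom-vanishing is inherited by the extension closure. -/
lemma extClosure_hom_left {m : DerivedCategory (ModuleCat.{0} A)}
    {P : DerivedCategory (ModuleCat.{0} A) → Prop}
    (h0 : ∀ z, P z → ∀ f : z ⟶ m, f = 0)
    {z : DerivedCategory (ModuleCat.{0} A)} (hz : ExtClosure A P z) :
    ∀ f : z ⟶ m, f = 0 := by
  induction hz with
  | of h => exact h0 _ h
  | zero h => exact fun f => h.eq_of_src f 0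
  | iso e _ ih => exact zero_of_iso_src e ih
  | ext f g w hT _ _ ihx ihz =>
      intro k
      obtain ⟨l, hl⟩ := Triangle.yoneda_exact₂ _ hT k (ihx _)
      rw [hl, ihz l]; exact comp_zero

/-- Covariant Hom-vanishing is inherited by the extension closure. -/
lemma extClosure_hom_cov {m : DerivedCategory (ModuleCat.{0} A)}
    {P : DerivedCategory (ModuleCat.{0} A) → Prop}
    (h0 : ∀ z, P z → ∀ f : m ⟶ z, f = 0)
    {z : DerivedCategory (ModuleCat.{0} A)} (hz : ExtClosure A P z) :
    ∀ f : m ⟶ z, f = 0 := by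
  induction hz with
  | of h => exact h0 _ h
  | zero h => exact fun f => h.eq_of_tgt f 0
  | iso e _ ih => exact zero_of_iso_tgt e ih
  | ext f g w hT _ _ ihx ihz =>
      intro k
      obtain ⟨l, hl⟩ := Triangle.coyoneda_exact₂ _ hT k (ihz _)
      rw [hl, ihx l]; exact zero_comp

end Helpers

/-- If `U = {y_1,...,y_r}` is a simple minded collection,
`x ∈ [a,b]_U` and `Hom(H^b_U(x), y i) = 0` (equivalently `Hom(x, (y i)[-b]) = 0`),
then `x ∈ [a,b]_{ν_i U}`. -/
theorem memIcc_left_mutation_of_hom_top_vanishes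
    (U : SMC A) (x : DerivedCategory (ModuleCat.{0} A)) (hx : Bounded A x)
    (a b : ℤ) (hab : a ≤ b) (h : MemIcc A U a b x)
    (i : U.ι) (htop : ∀ f : x ⟶ (U.y i)⟦(-b : ℤ)⟧, f = 0)
    (V : LeftMutation A U i) :
    MemIccFam A V.y' a b x := by
  obtain ⟨e⟩ := V.at_i
  obtain ⟨h1, h2⟩ := h
  have htop' : ∀ s : ℤ, s ≤ -b → ∀ f : x ⟶ (U.y i)⟦s⟧, f = 0 := by
    intro s hs
    rcases hs.lt_or_eq with h' | h'
    · exact h2 i s h'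
    · subst h'; exact htop
  constructor
  · intro j t ht f
    by_cases hj : j = i
    · subst hj
      refine zero_of_iso_src e.symm ?_ f
      exact fun g => zero_of_iso_tgt
        (((shiftFunctorAdd' (DerivedCategory (ModuleCat.{0} A)) (t - 1) 1 t
          (by ring)).app x).symm)
        (zero_shift 1 (h1 j (t - 1) (by omega))) g
    · obtain ⟨g, hg⟩ := Triangle.yoneda_exact₃ _ (V.tri j hj) f
        (extClosure_hom_left (fun z hz => by subst hz; exact h1 i t ht) (V.hc j hj) _)
      have hg0 : g = 0 := zero_of_iso_src
        (((shiftFunctorCompIsoId (DerivedCategory (ModuleCat.{0} A)) (-1 : ℤ) (1 : ℤ)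
          (by ring)).app (U.y j)).symm)
        (h1 j t ht) g
      rw [hg, hg0, comp_zero]; rfl
  · intro j t ht f
    by_cases hj : j = i
    · subst hj
      refine zero_of_iso_tgt
        ((shiftFunctor (DerivedCategory (ModuleCat.{0} A)) t).mapIso e.symm) ?_ f
      exact fun g => zero_of_iso_tgt
        ((shiftFunctorAdd' (DerivedCategory (ModuleCat.{0} A)) 1 t (1 + t) rfl).app (U.y j))
        (htop' (1 + t) (by omega)) g
    · have key : ∀ g : x⟦(-t : ℤ)⟧ ⟶ V.y' j, g = 0 := by
        intro g
        have hf3 : g ≫ V.χ j = 0 := zero_of_iso_tgt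
          (((shiftFunctorCompIsoId (DerivedCategory (ModuleCat.{0} A)) t (-t)
            (by ring)).app (U.y j)) ≪≫
           ((shiftFunctorCompIsoId (DerivedCategory (ModuleCat.{0} A)) (-1 : ℤ) (1 : ℤ)
            (by ring)).app (U.y j)).symm)
          (zero_shift (-t) (h2 j t ht)) _
        obtain ⟨l, hl⟩ := Triangle.coyoneda_exact₃ _ (V.tri j hj) g hf3
        have hl0 : l = 0 := extClosure_hom_cov (fun z hz => by
          subst hz
          exact fun m => zero_of_iso_tgt
            ((shiftFunctorCompIsoId (DerivedCategory (ModuleCat.{0} A)) t (-t)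
              (by ring)).app (U.y i))
            (zero_shift (-t) (h2 i t ht)) m) (V.hc j hj) l
        rw [hl, hl0, zero_comp]; rfl
      exact zero_of_iso_src
        ((shiftFunctorCompIsoId (DerivedCategory (ModuleCat.{0} A)) (-t) t (by ring)).app x)
        (zero_shift t key) f

end SMCF
end
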